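/- Let x ≠ y ∈ Σ_q^n with d_H(R(x), R(y)) = d ≥ 2, where R denotes the 2-read vector. Then the indicator sequences satisfy 1 ≤ d_H(𝟙(x), 𝟙(y)) ≤ d. -/

import Mathlib

/-- Entry of a list at 0-indexed integer position, default `0` outside the range. -/
def lget (q : ℕ) [NeZero q] (x : List (Fin q)) (j : ℤ) : Fin q :=
  if 0 ≤ j then x.getD j.toNat 0 else 0

/-- The 2-read vector of a list `x` of length `n`. -/
def read2 (q n : ℕ) [NeZero q] (x : List (Fin q)) : Fin (n + 1) → Multiset (Fin q) :=
  fun k => {lget q x ((k : ℤ) - 1), lget q x (k : ℤ)}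

/-- The indicator sequence `𝟙(x)`: its `i`-th entry (1-indexed `i+1` for `i : Fin n`)
is `x[i+1] + x[i] mod q` (with `x[0] = 0`). -/
def indic (q n : ℕ) [NeZero q] (x : List (Fin q)) : Fin n → Fin q :=
  fun i => lget q x (i : ℤ) + lget q x ((i : ℤ) - 1)

lemma indic_inj (q n : ℕ) [NeZero q] (x y : List (Fin q))
    (hx : x.length = n) (hy : y.length = n)
    (h : indic q n x = indic q n y) : x = y := by
  have H : ∀ m : ℕ, lget q x (m : ℤ) = lget q y (m : ℤ) := by
    intro m
    induction m with
    | zero =>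
      by_cases h0 : 0 < n
      · have := congrFun h ⟨0, h0⟩
        simp [indic, lget] at this
        simpa [lget] using this
      · simp at h0
        subst h0
        simp [lget, List.getD_eq_default, List.length_eq_zero_iff.mp hx,
          List.length_eq_zero_iff.mp hy]
    | succ m ih =>
      by_cases hm : m + 1 < n
      · have := congrFun h ⟨m + 1, hm⟩
        simp [indic] at this
        rw [ih] at this
        have e : ((m + 1 : ℕ) : ℤ) = (m : ℤ) + 1 := by push_cast; ring
        rw [e]
        exact add_right_cancel this
      · push_neg at hm
        have hz : ∀ z : List (Fin q), z.length = n → lget q z ((m + 1 : ℕ) : ℤ) = 0 := by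
          intro z hz
          unfold lget
          rw [if_pos (Int.natCast_nonneg _), Int.toNat_natCast,
            List.getD_eq_default _ _ (by omega)]
        rw [hz x hx, hz y hy]
  apply List.ext_getElem (hx.trans hy.symm)
  intro i h1 h2
  have := H i
  simp [lget, List.getElem?_eq_getElem, h1, h2] at this
  exact this

theorem stmt5 (q n d : ℕ) [NeZero q] (x y : List (Fin q))
    (hx : x.length = n) (hy : y.length = n) (hxy : x ≠ y) (hd2 : 2 ≤ d)
    (hd : hammingDist (read2 q n x) (read2 q n y) = d) :
    1 ≤ hammingDist (indic q n x) (indic q n y) ∧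
      hammingDist (indic q n x) (indic q n y) ≤ d := by
  constructor
  · rw [Nat.one_le_iff_ne_zero]
    intro h0
    exact hxy (indic_inj q n x y hx hy (hammingDist_eq_zero.mp h0))
  · rw [← hd]
    have key : ∀ i : Fin n, indic q n x i ≠ indic q n y i →
        read2 q n x i.castSucc ≠ read2 q n y i.castSucc := by
      intro i hne heq
      apply hne
      have := congrArg Multiset.sum heq
      simp [read2, Fin.coe_castSucc] at this
      simpa [indic, add_comm] using this
    unfold hammingDist
    apply Finset.card_le_card_of_injOn (fun i => Fin.castSucc i)
    · intro i hi
      simp only [Finset.mem_coe, Finset.mem_filter, Finset.mem_univ, true_and] at hi ⊢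
      exact key i hi
    · exact fun a _ b _ hab => Fin.castSucc_injective n hab
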